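/- The NUIBR condition implies the no-arbitrage condition: if the model satisfies the no unbounded non-substitutable investment with bounded risk (NUIBR) condition, then for every N ∈ 𝒩, V^α(0,N) ≥ 0 a.s. implies V^α(0,N) = 0 a.s. -/

import Mathlib

open MeasureTheory Filter Finset

noncomputable section
open scoped Classical

/-- Euclidean inner product on `Fin d → ℝ`. -/
def dotp {d : ℕ} (a b : Fin d → ℝ) : ℝ := ∑ j, a j * b j

/-- Euclidean norm on `Fin d → ℝ`. -/
def eucNorm {d : ℕ} (a : Fin d → ℝ) : ℝ := Real.sqrt (∑ j, a j ^ 2)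

/-- Accumulated realized gains and losses `G_t`, given the bank account history `eta`:
`G_t = ∑_{u=1}^t ( η_{u-1} r_u + ∑_{i=0}^{u-1} ⟨N_{i,u-1} - N_{i,u}, S_u - S_i⟩ )`. -/
def Gaux {d : ℕ} (S : ℕ → Fin d → ℝ) (r : ℕ → ℝ) (N : ℕ → ℕ → Fin d → ℝ)
    (eta : ℕ → ℝ) (t : ℕ) : ℝ :=
  ∑ u ∈ Finset.Icc 1 t,
    (eta (u - 1) * r u +
      ∑ i ∈ Finset.range u, dotp (fun j => N i (u - 1) j - N i u j) (fun j => S u j - S i j))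

/-- Limited-use-of-losses tax payments `Π_t = α · max_{0 ≤ u ≤ t} G_u`. -/
def Piaux {d : ℕ} (α : ℝ) (S : ℕ → Fin d → ℝ) (r : ℕ → ℝ) (N : ℕ → ℕ → Fin d → ℝ)
    (eta : ℕ → ℝ) (t : ℕ) : ℝ :=
  α * (Finset.range (t + 1)).sup' ⟨0, Finset.mem_range.mpr (Nat.succ_pos t)⟩ (fun u => Gaux S r N eta u)

/-- `etaHist α x S r N t` is the bank-account history after trading and taxes, up to time `t`:
for `s ≤ t` it gives `η_s`, and for `s > t` it gives `η_t`.  It is defined by the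
self-financing recursion `η_{-1} = x`,
`η_t - η_{t-1} = r_t η_{t-1} 1_{t ≥ 1} + ⟨∑_{i<t}(N_{i,t-1} - N_{i,t}) - N_{t,t}, S_t⟩
  - (Π_t - Π_{t-1}) 1_{t ≥ 1}`. -/
def etaHist {d : ℕ} (α x : ℝ) (S : ℕ → Fin d → ℝ) (r : ℕ → ℝ)
    (N : ℕ → ℕ → Fin d → ℝ) : ℕ → ℕ → ℝ :=
  Nat.rec (motive := fun _ => ℕ → ℝ)
    (fun _ => x - dotp (fun j => N 0 0 j) (fun j => S 0 j))
    (fun t e => fun s =>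
      if s ≤ t then e s
      else
        e t + r (t + 1) * e t
          + dotp
              (fun j => (∑ i ∈ Finset.range (t + 1), (N i t j - N i (t + 1) j))
                - N (t + 1) (t + 1) j)
              (fun j => S (t + 1) j)
          - (Piaux α S r N e (t + 1) - Piaux α S r N e t))

/-- A discrete-time market with horizon `T`, `d` risky assets, a filtration `F`,
adapted nonnegative-price processes are not required in general, and a nonnegative adapted
interest-rate process `r`. -/
structure Market (Ω : Type*) [m0 : MeasurableSpace Ω] (T d : ℕ) where
  P : Measure Ω
  hProb : IsProbabilityMeasure P
  F : ℕ → MeasurableSpace Ω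
  F_le : ∀ t, F t ≤ m0
  F_mono : Monotone F
  S : ℕ → Ω → Fin d → ℝ
  S_adapted : ∀ t, Measurable[F t] (S t)
  r : ℕ → Ω → ℝ
  r_nonneg : ∀ t ω, 0 ≤ r t ω
  r_adapted : ∀ t, Measurable[F t] (r t)

variable {Ω : Type*} [m0 : MeasurableSpace Ω] {T d : ℕ}

/-- A trading strategy: `N i t ω j` is the number of shares of asset `j` bought at time `i`
and still held after trading at time `t`.  It is `F t`-adapted, nonnegative, nonincreasing
in `t` (for `i ≤ t < T`), forced to liquidate at `T`, and zero before the purchase date. -/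
def Market.IsStrategy (M : Market Ω T d) (N : ℕ → ℕ → Ω → Fin d → ℝ) : Prop :=
  (∀ i t, Measurable[M.F t] (N i t)) ∧
  (∀ i t ω j, 0 ≤ N i t ω j) ∧
  (∀ i t, i ≤ t → t < T → ∀ ω j, N i (t + 1) ω j ≤ N i t ω j) ∧
  (∀ i ω j, N i T ω j = 0) ∧
  (∀ i t, t < i → ∀ ω j, N i t ω j = 0)

/-- After-tax terminal wealth `V^α(x,N) = η_T`. -/
def Market.V (M : Market Ω T d) (α x : ℝ) (N : ℕ → ℕ → Ω → Fin d → ℝ) (ω : Ω) : ℝ :=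
  etaHist α x (fun t => M.S t ω) (fun t => M.r t ω) (fun i t => N i t ω) T T

/-- The frictionless (tax-free) wealth process `V^0_t(x,N) = η_t + ⟨∑_{i≤t} N_{i,t}, S_t⟩`,
where `η` is the bank account for tax rate `0`. -/
def Market.V0proc (M : Market Ω T d) (x : ℝ) (N : ℕ → ℕ → Ω → Fin d → ℝ) (t : ℕ) (ω : Ω) : ℝ :=
  etaHist 0 x (fun u => M.S u ω) (fun u => M.r u ω) (fun i u => N i u ω) t t
    + dotp (fun j => ∑ i ∈ Finset.range (t + 1), N i t ω j) (fun j => M.S t ω j)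

/-- The no-arbitrage condition for tax rate `α`. -/
def Market.NA (M : Market Ω T d) (α : ℝ) : Prop :=
  ∀ N, M.IsStrategy N → (∀ᵐ ω ∂M.P, 0 ≤ M.V α 0 N ω) → ∀ᵐ ω ∂M.P, M.V α 0 N ω = 0

/-- The set `{V^α(x,N) : N ∈ 𝒩} - L^0(F_T; ℝ₊)` of attainable after-tax terminal wealths. -/
def Market.Vset (M : Market Ω T d) (α x : ℝ) : Set (Ω → ℝ) :=
  {f | ∃ N, M.IsStrategy N ∧
    ∃ g : Ω → ℝ, Measurable[M.F T] g ∧ (∀ ω, 0 ≤ g ω) ∧ f = fun ω => M.V α x N ω - g ω}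

/-- The frictionless wealth recursion
`V_t = (1+r_t) V_{t-1} + ⟨∑_{i<t} N_{i,t-1}, S_t - (1+r_t) S_{t-1}⟩`. -/
def wealth0 {d : ℕ} (S : ℕ → Fin d → ℝ) (r : ℕ → ℝ) (N : ℕ → ℕ → Fin d → ℝ) (x : ℝ) :
    ℕ → ℝ :=
  Nat.rec (motive := fun _ => ℝ) x (fun t W =>
    (1 + r (t + 1)) * W
      + dotp (fun j => ∑ i ∈ Finset.range (t + 1), N i t j)
          (fun j => S (t + 1) j - (1 + r (t + 1)) * S t j))

/-- Frictionless terminal wealth `V^0(x,N)`. -/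
def Market.V0 (M : Market Ω T d) (x : ℝ) (N : ℕ → ℕ → Ω → Fin d → ℝ) (ω : Ω) : ℝ :=
  wealth0 (fun t => M.S t ω) (fun t => M.r t ω) (fun i t => N i t ω) x T

/-- No-arbitrage for the frictionless model. -/
def Market.NA0 (M : Market Ω T d) : Prop :=
  ∀ N, M.IsStrategy N → (∀ᵐ ω ∂M.P, 0 ≤ M.V0 0 N ω) → ∀ᵐ ω ∂M.P, M.V0 0 N ω = 0

/-- The cone `ℛ_t` of reversible one-period strategies. -/
def Market.RevCone (M : Market Ω T d) (t : ℕ) : Set (Ω → Fin d → ℝ) :=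
  {β | Measurable[M.F t] β ∧ (∀ ω j, 0 ≤ β ω j) ∧
    ∀ᵐ ω ∂M.P, dotp (β ω) (fun j => M.S (t + 1) ω j - (1 + M.r (t + 1) ω) * M.S t ω j) = 0}

/-- `q` is the purely nonreversible part `q_t(β)` of `β`: it is `F_t`-measurable, nonnegative,
`β - q` is reversible, and `q` has minimal Euclidean norm among all such decompositions. -/
def Market.IsQ (M : Market Ω T d) (t : ℕ) (β q : Ω → Fin d → ℝ) : Prop :=
  Measurable[M.F t] q ∧ (∀ ω j, 0 ≤ q ω j) ∧
  (fun ω j => β ω j - q ω j) ∈ M.RevCone t ∧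
  ∀ q' : Ω → Fin d → ℝ, Measurable[M.F t] q' → (∀ ω j, 0 ≤ q' ω j) →
    (fun ω j => β ω j - q' ω j) ∈ M.RevCone t →
    ∀ᵐ ω ∂M.P, eucNorm (q ω) ≤ eucNorm (q' ω)

/-- `β` is purely nonreversible, i.e. `q_t(β) = β`. -/
def Market.PurelyNonRev (M : Market Ω T d) (t : ℕ) (β : Ω → Fin d → ℝ) : Prop :=
  M.IsQ t β β

/-- A reaction function: `R ω a i t` may depend on `ω` only through `F_t` and on the action
history `a` only through the actions up to time `t`; it is nonnegative, nonincreasing in `t`,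
vanishes at and after the horizon `T` and before the purchase date. -/
structure ReactionFun (M : Market Ω T d) where
  R : Ω → (ℕ → ℕ → Fin d → ℝ) → ℕ → ℕ → Fin d → ℝ
  nonneg : ∀ ω a i t j, 0 ≤ R ω a i t j
  adapted_actions : ∀ ω a a' i t, (∀ i' t', t' ≤ t → a i' t' = a' i' t') →
    R ω a i t = R ω a' i t
  meas : ∀ i t, Measurable[(M.F t).prod inferInstance]
    (fun p : Ω × (ℕ → ℕ → Fin d → ℝ) => R p.1 p.2 i t)
  antitone : ∀ ω a i t, i ≤ t → t + 2 ≤ T → ∀ j, R ω a i (t + 1) j ≤ R ω a i t j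
  upper : ∀ ω a i t, T ≤ t → ∀ j, R ω a i t j = 0
  lower : ∀ ω a i t, t < i → ∀ j, R ω a i t j = 0

/-- The strategy `R(N)` produced by a reaction function from a strategy `N`. -/
def ReactionFun.apply {M : Market Ω T d} (Rf : ReactionFun M)
    (N : ℕ → ℕ → Ω → Fin d → ℝ) : ℕ → ℕ → Ω → Fin d → ℝ :=
  fun i t ω => Rf.R ω (fun i' t' => N i' t' ω) i t

/-- `max_{i=0,…,T-1, j=1,…,d} N_{i,i,j}`. -/
def stratMax {Ω : Type*} {d : ℕ} (T : ℕ) (N : ℕ → ℕ → Ω → Fin d → ℝ) (ω : Ω) : ℝ :=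
  ⨆ i ∈ Finset.range T, ⨆ j : Fin d, N i i ω j

/-- A family of random variables is bounded in `L⁰` (bounded in probability). -/
def BoundedInL0 {Ω : Type*} [MeasurableSpace Ω] (P : Measure Ω) (𝒮 : Set (Ω → ℝ)) : Prop :=
  ∀ ε : ℝ, 0 < ε → ∃ C : ℝ, ∀ f ∈ 𝒮, P {ω | C < |f ω|} ≤ ENNReal.ofReal ε

/-- The "no unbounded non-substitutable investment with bounded risk" condition. -/
def Market.NUIBR (M : Market Ω T d) (α : ℝ) : Prop :=
  ∀ x : ℝ, ∃ Rf : ReactionFun M,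
    (∀ N, M.IsStrategy N → M.IsStrategy (Rf.apply N)) ∧
    (∀ N, M.IsStrategy N → ∀ᵐ ω ∂M.P, M.V α x N ω ≤ M.V α x (Rf.apply N) ω) ∧
    ∀ K : ℝ, 0 ≤ K →
      BoundedInL0 M.P (convexHull ℝ
        {f : Ω → ℝ | ∃ N, M.IsStrategy N ∧ (∀ᵐ ω ∂M.P, -K ≤ M.V α x N ω) ∧
          f = stratMax T (Rf.apply N)})

/-- A set of random variables is closed with respect to convergence in probability
(as a subset of `L⁰`, i.e. up to almost-sure equality). -/
def ClosedInProbability {Ω : Type*} [MeasurableSpace Ω] (P : Measure Ω)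
    (𝒮 : Set (Ω → ℝ)) : Prop :=
  ∀ (f : ℕ → Ω → ℝ) (g : Ω → ℝ), (∀ n, f n ∈ 𝒮) →
    TendstoInMeasure P f Filter.atTop g → ∃ g' ∈ 𝒮, g' =ᵐ[P] g


/-- Bank account process for an artificial linear tax rule `τ`:
taxes `Π^{(τ)}_t = α · G_{τ_t}` are paid according to the rule `τ` (with `τ 0 = 0`,
so that `Π^{(τ)}_0 = 0`).  `etaTau α x S r N τ t s` gives `η^{(τ)}_s` for `s ≤ t`. -/
def etaTau {d : ℕ} (α x : ℝ) (S : ℕ → Fin d → ℝ) (r : ℕ → ℝ)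
    (N : ℕ → ℕ → Fin d → ℝ) (τ : ℕ → ℕ) : ℕ → ℕ → ℝ :=
  Nat.rec (motive := fun _ => ℕ → ℝ)
    (fun _ => x - dotp (fun j => N 0 0 j) (fun j => S 0 j))
    (fun t e => fun s =>
      if s ≤ t then e s
      else
        e t + r (t + 1) * e t
          + dotp
              (fun j => (∑ i ∈ Finset.range (t + 1), (N i t j - N i (t + 1) j))
                - N (t + 1) (t + 1) j)
              (fun j => S (t + 1) j)
          - (α * Gaux S r N e (τ (t + 1)) - α * Gaux S r N e (τ t)))

variable {Ω : Type*} [m0 : MeasurableSpace Ω] {T d : ℕ}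

/-- An artificial linear tax rule: an adapted `{0,…,T}`-valued process `τ` with `τ_0 = 0`,
`τ` nondecreasing in `t`, `τ_t ≤ t`, and `τ_{τ_t} = τ_t` whenever `τ_t ≥ 1`. -/
def Market.IsTaxRule (M : Market Ω T d) (τ : ℕ → Ω → ℕ) : Prop :=
  (∀ ω, τ 0 ω = 0) ∧
  (∀ t, Measurable[M.F t] (τ t)) ∧
  (∀ t ω, τ t ω ≤ t) ∧
  (∀ t ω, τ t ω ≤ T) ∧
  (∀ s t, s ≤ t → ∀ ω, τ s ω ≤ τ t ω) ∧
  (∀ t ω, 1 ≤ τ t ω → τ (τ t ω) ω = τ t ω)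

/-- Terminal bank account `η^{(τ)}_T(N)` under the artificial tax rule `τ`. -/
def Market.etaTauT (M : Market Ω T d) (α x : ℝ) (N : ℕ → ℕ → Ω → Fin d → ℝ)
    (τ : ℕ → Ω → ℕ) (ω : Ω) : ℝ :=
  etaTau α x (fun t => M.S t ω) (fun t => M.r t ω) (fun i t => N i t ω) (fun t => τ t ω) T T

/-- A strategy realizes losses: it does not keep shares that trade below their purchase
price. -/
def Market.RealizesLosses (M : Market Ω T d) (N : ℕ → ℕ → Ω → Fin d → ℝ) : Prop :=
  ∀ i t j, i < t → t ≤ T → ∀ᵐ ω ∂M.P, M.S t ω j < M.S i ω j → N i t ω j = 0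

/-- The loss bound `L_t(N) = ((−x) ∨ 0 + ∑_{s<t} ⟨q_s(∑_{i≤s} N_{i,s}), S_s⟩)(1+r̄)^T`,
expressed through a given family `q s` of purely nonreversible parts. -/
def Lfun {Ω : Type*} {d : ℕ} (x rbar : ℝ) (T : ℕ) (S : ℕ → Ω → Fin d → ℝ)
    (q : ℕ → Ω → Fin d → ℝ) (t : ℕ) (ω : Ω) : ℝ :=
  (max (-x) 0 + ∑ s ∈ Finset.range t, dotp (q s ω) (fun j => S s ω j)) * (1 + rbar) ^ T

/-- A stopping time of the filtration `F`. -/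
def IsStoppingTimeFun {Ω : Type*} (F : ℕ → MeasurableSpace Ω) (τ : Ω → ℕ) : Prop :=
  ∀ t : ℕ, MeasurableSet[F t] {ω | τ ω ≤ t}

/-- The family of random variables over which the essential infimum defining `ε_t` is
taken. -/
def Market.epsFamily (M : Market Ω T d) (t : ℕ) : Set (Ω → ENNReal) :=
  {g | ∃ (ε : Ω → ℝ) (A : Set Ω) (N : ℕ → ℕ → Ω → Fin d → ℝ),
    Measurable[M.F t] ε ∧ (∀ ω, ε ω ∈ Set.Icc (0:ℝ) 1) ∧
    MeasurableSet[M.F t] A ∧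
    M.IsStrategy N ∧ (∀ i, i < t → ∀ ω j, N i i ω j = 0) ∧
    M.PurelyNonRev t (fun ω => N t t ω) ∧
    (∀ᵐ ω ∂M.P, eucNorm (N t t ω) = Set.indicator A (fun _ => (1:ℝ)) ω) ∧
    (∀ᵐ ω ∂M.P,
      (M.P[Set.indicator {ω' | M.V0 0 N ω' ≤ - ε ω'} (fun _ => (1:ℝ)) | M.F t]) ω ≤ ε ω) ∧
    g = fun ω => if ω ∈ A then ENNReal.ofReal (ε ω) else (⊤ : ENNReal)}

/-- `e` is the essential infimum of the family `𝒮` of `[0,∞]`-valued random variables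
(with respect to `P`, measurable with respect to `m'`). -/
def IsEssInfOfSet {Ω : Type*} [MeasurableSpace Ω] (m' : MeasurableSpace Ω) (P : Measure Ω)
    (𝒮 : Set (Ω → ENNReal)) (e : Ω → ENNReal) : Prop :=
  Measurable[m'] e ∧ (∀ g ∈ 𝒮, ∀ᵐ ω ∂P, e ω ≤ g ω) ∧
  ∀ e' : Ω → ENNReal, Measurable[m'] e' → (∀ g ∈ 𝒮, ∀ᵐ ω ∂P, e' ω ≤ g ω) →
    ∀ᵐ ω ∂P, e' ω ≤ e ω

/-- The positive part of an extended-real number, as an element of `[0,∞]`. -/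
def erealPos (y : EReal) : ENNReal := if y = ⊤ then ⊤ else ENNReal.ofReal y.toReal

/-- A utility function: `U = -∞` on the negative half-line, real-valued, nondecreasing and
concave on the positive half-line (with real restriction `u`), and continuous from the
right at `0`. -/
structure UtilityFun where
  U : ℝ → EReal
  u : ℝ → ℝ
  neg_bot : ∀ y : ℝ, y < 0 → U y = ⊥
  pos_real : ∀ y : ℝ, 0 < y → U y = (u y : EReal)
  mono : MonotoneOn u (Set.Ioi (0:ℝ))
  concave : ConcaveOn ℝ (Set.Ioi (0:ℝ)) u
  zero_lim : Filter.Tendsto U (nhdsWithin 0 (Set.Ioi (0:ℝ))) (nhds (U 0))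

/-- Expected utility `E[U(X)] = E[U⁺(X)] - E[U⁻(X)]`, with the convention that it equals
`-∞` whenever `E[U⁻(X)] = ∞`. -/
def expUtility {Ω : Type*} [MeasurableSpace Ω] (P : Measure Ω) (Uf : UtilityFun)
    (X : Ω → ℝ) : EReal :=
  if (∫⁻ ω, erealPos (-(Uf.U (X ω))) ∂P) = ⊤ then ⊥
  else ((∫⁻ ω, erealPos (Uf.U (X ω)) ∂P : ENNReal) : EReal)
    - ((∫⁻ ω, erealPos (-(Uf.U (X ω))) ∂P : ENNReal) : EReal)

/-- The value function `u^α(x) = sup_{N ∈ 𝒜^α(x)} E[U(V^α(x,N))]` of the utility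
maximization problem with taxes. -/
def Market.valueFn (M : Market Ω T d) (Uf : UtilityFun) (α x : ℝ) : EReal :=
  ⨆ N ∈ {N : ℕ → ℕ → Ω → Fin d → ℝ |
      M.IsStrategy N ∧ ∀ᵐ ω ∂M.P, 0 ≤ M.V α x N ω},
    expUtility M.P Uf (fun ω => M.V α x N ω)

/-- The value function `u^0(x)` of the frictionless utility maximization problem. -/
def Market.valueFn0 (M : Market Ω T d) (Uf : UtilityFun) (x : ℝ) : EReal :=
  ⨆ N ∈ {N : ℕ → ℕ → Ω → Fin d → ℝ |
      M.IsStrategy N ∧ ∀ᵐ ω ∂M.P, 0 ≤ M.V0 x N ω},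
    expUtility M.P Uf (fun ω => M.V0 x N ω)

/-- The set `{V^α(x,N) : N ∈ 𝒜^α(x)} - L^0(F_T; ℝ₊)`. -/
def Market.VsetNonneg (M : Market Ω T d) (α x : ℝ) : Set (Ω → ℝ) :=
  {f | ∃ N, M.IsStrategy N ∧ (∀ᵐ ω ∂M.P, 0 ≤ M.V α x N ω) ∧
    ∃ g : Ω → ℝ, Measurable[M.F T] g ∧ (∀ ω, 0 ≤ g ω) ∧ f = fun ω => M.V α x N ω - g ω}

/-- The set `{V^0(x,N) : N ∈ 𝒩} - L^0(F_T; ℝ₊)` for the frictionless model. -/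
def Market.V0set (M : Market Ω T d) (x : ℝ) : Set (Ω → ℝ) :=
  {f | ∃ N, M.IsStrategy N ∧
    ∃ g : Ω → ℝ, Measurable[M.F T] g ∧ (∀ ω, 0 ≤ g ω) ∧ f = fun ω => M.V0 x N ω - g ω}

/-- A measurable (set-valued) random set: preimages of open sets are measurable. -/
def MeasRandomSet {Ω : Type*} (m : MeasurableSpace Ω) {d : ℕ}
    (K : Ω → Set (Fin d → ℝ)) : Prop :=
  ∀ O : Set (Fin d → ℝ), IsOpen O → MeasurableSet[m] {ω | (K ω ∩ O).Nonempty}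

/-- The random set `A_t = {β ∈ 𝒫_t : 1 + r_{t+1} + ⟨β, S_{t+1} - (1+r_{t+1})S_t⟩ ≥ 0 a.s.}`. -/
def Market.AtSet (M : Market Ω T d) (t : ℕ) : Set (Ω → Fin d → ℝ) :=
  {β | M.PurelyNonRev t β ∧
    ∀ᵐ ω ∂M.P, 0 ≤ 1 + M.r (t + 1) ω
      + dotp (β ω) (fun j => M.S (t + 1) ω j - (1 + M.r (t + 1) ω) * M.S t ω j)}

/-! ### Auxiliary lemmas for the proof of `NA_of_NUIBR` -/

section AuxNUIBR

variable {d' : ℕ}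

lemma etaHist_zero' (α x : ℝ) (S : ℕ → Fin d' → ℝ) (r : ℕ → ℝ)
    (N : ℕ → ℕ → Fin d' → ℝ) (s : ℕ) :
    etaHist α x S r N 0 s = x - dotp (fun j => N 0 0 j) (fun j => S 0 j) := rfl

lemma etaHist_succ' (α x : ℝ) (S : ℕ → Fin d' → ℝ) (r : ℕ → ℝ)
    (N : ℕ → ℕ → Fin d' → ℝ) (t s : ℕ) :
    etaHist α x S r N (t + 1) s =
      if s ≤ t then etaHist α x S r N t s
      else
        etaHist α x S r N t t + r (t + 1) * etaHist α x S r N t t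
          + dotp
              (fun j => (∑ i ∈ Finset.range (t + 1), (N i t j - N i (t + 1) j))
                - N (t + 1) (t + 1) j)
              (fun j => S (t + 1) j)
          - (Piaux α S r N (etaHist α x S r N t) (t + 1)
              - Piaux α S r N (etaHist α x S r N t) t) := rfl

lemma dotp_smul_left (c : ℝ) (a b : Fin d' → ℝ) :
    dotp (fun j => c * a j) b = c * dotp a b := by
  simp only [dotp, Finset.mul_sum, mul_assoc]

lemma Gaux_smul (c : ℝ) (S : ℕ → Fin d' → ℝ) (r : ℕ → ℝ) (N : ℕ → ℕ → Fin d' → ℝ)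
    (e : ℕ → ℝ) (t : ℕ) :
    Gaux S r (fun i u j => c * N i u j) (fun s => c * e s) t = c * Gaux S r N e t := by
  simp only [Gaux]
  rw [Finset.mul_sum]
  refine Finset.sum_congr rfl fun u _ => ?_
  rw [mul_add]
  congr 1
  · ring
  · rw [Finset.mul_sum]
    refine Finset.sum_congr rfl fun i _ => ?_
    have h : (fun j => c * N i (u - 1) j - c * N i u j)
        = fun j => c * (N i (u - 1) j - N i u j) := funext fun j => by ring
    rw [h, dotp_smul_left]

lemma Piaux_smul {c : ℝ} (hc : 0 ≤ c) (α : ℝ) (S : ℕ → Fin d' → ℝ) (r : ℕ → ℝ)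
    (N : ℕ → ℕ → Fin d' → ℝ) (e : ℕ → ℝ) (t : ℕ) :
    Piaux α S r (fun i u j => c * N i u j) (fun s => c * e s) t
      = c * Piaux α S r N e t := by
  simp only [Piaux]
  have h1 : ((Finset.range (t + 1)).sup' Finset.nonempty_range_add_one
      fun u => Gaux S r (fun i u j => c * N i u j) (fun s => c * e s) u)
      = (Finset.range (t + 1)).sup' Finset.nonempty_range_add_one
          fun u => c * Gaux S r N e u :=
    Finset.sup'_congr _ rfl fun u _ => Gaux_smul c S r N e u
  have h2 := Finset.comp_sup'_eq_sup'_comp (γ := ℝ)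
    (Finset.nonempty_range_add_one (n := t)) (f := fun u => Gaux S r N e u)
    (fun x : ℝ => c * x)
    (fun x y => by exact mul_max_of_nonneg x y hc)
  simp only [Function.comp] at h2
  rw [h1, ← h2]
  ring

lemma etaHist_smul {c : ℝ} (hc : 0 ≤ c) (α : ℝ) (S : ℕ → Fin d' → ℝ) (r : ℕ → ℝ)
    (N : ℕ → ℕ → Fin d' → ℝ) :
    ∀ t s, etaHist α 0 S r (fun i u j => c * N i u j) t s
      = c * etaHist α 0 S r N t s := by
  intro t
  induction t with
  | zero =>
    intro s
    rw [etaHist_zero', etaHist_zero', dotp_smul_left]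
    ring
  | succ t ih =>
    intro s
    rw [etaHist_succ', etaHist_succ']
    by_cases hs : s ≤ t
    · rw [if_pos hs, if_pos hs]
      exact ih s
    · rw [if_neg hs, if_neg hs]
      have hec : etaHist α 0 S r (fun i u j => c * N i u j) t
          = fun s => c * etaHist α 0 S r N t s := funext ih
      rw [hec]
      have hsum : (fun j => (∑ i ∈ Finset.range (t + 1), (c * N i t j - c * N i (t + 1) j))
            - c * N (t + 1) (t + 1) j)
          = fun j => c * ((∑ i ∈ Finset.range (t + 1), (N i t j - N i (t + 1) j))
            - N (t + 1) (t + 1) j) := by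
        funext j
        rw [show (∑ i ∈ Finset.range (t + 1), (c * N i t j - c * N i (t + 1) j))
            = c * ∑ i ∈ Finset.range (t + 1), (N i t j - N i (t + 1) j) by
          rw [Finset.mul_sum]; exact Finset.sum_congr rfl fun i _ => by ring]
        ring
      rw [hsum, dotp_smul_left, Piaux_smul hc, Piaux_smul hc]
      ring

/-- Sum of absolute prices, used in the deterministic bound. -/
def Sb (S : ℕ → Fin d' → ℝ) (t : ℕ) : ℝ := ∑ j, |S t j|

lemma Sb_nonneg (S : ℕ → Fin d' → ℝ) (t : ℕ) : 0 ≤ Sb S t :=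
  Finset.sum_nonneg fun _ _ => abs_nonneg _

/-- Bound for `|Gaux|`, per unit of maximal position, given bounds `e` on the bank account. -/
def GBf (S : ℕ → Fin d' → ℝ) (r : ℕ → ℝ) (e : ℕ → ℝ) (t : ℕ) : ℝ :=
  ∑ u ∈ Finset.Icc 1 t, (e (u - 1) * r u + ∑ i ∈ Finset.range u, (Sb S u + Sb S i))

lemma GBf_nonneg {S : ℕ → Fin d' → ℝ} {r : ℕ → ℝ} {e : ℕ → ℝ}
    (hr : ∀ t, 0 ≤ r t) (he : ∀ u, 0 ≤ e u) (t : ℕ) : 0 ≤ GBf S r e t :=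
  Finset.sum_nonneg fun u _ => add_nonneg (mul_nonneg (he _) (hr _))
    (Finset.sum_nonneg fun _ _ => add_nonneg (Sb_nonneg _ _) (Sb_nonneg _ _))

lemma GBf_mono {S : ℕ → Fin d' → ℝ} {r : ℕ → ℝ} {e : ℕ → ℝ}
    (hr : ∀ t, 0 ≤ r t) (he : ∀ u, 0 ≤ e u) {u t : ℕ} (h : u ≤ t) :
    GBf S r e u ≤ GBf S r e t :=
  Finset.sum_le_sum_of_subset_of_nonneg (Finset.Icc_subset_Icc_right h)
    (fun i _ _ => add_nonneg (mul_nonneg (he _) (hr _))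
      (Finset.sum_nonneg fun _ _ => add_nonneg (Sb_nonneg _ _) (Sb_nonneg _ _)))

/-- Deterministic bound for the bank account, per unit of maximal position. -/
def EB (α : ℝ) (S : ℕ → Fin d' → ℝ) (r : ℕ → ℝ) : ℕ → ℕ → ℝ :=
  Nat.rec (fun _ => Sb S 0)
    (fun t e => fun s =>
      if s ≤ t then e s
      else e t + r (t + 1) * e t + ((t : ℝ) + 2) * Sb S (t + 1)
        + α * GBf S r e (t + 1) + α * GBf S r e t)

lemma EB_zero (α : ℝ) (S : ℕ → Fin d' → ℝ) (r : ℕ → ℝ) (s : ℕ) :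
    EB α S r 0 s = Sb S 0 := rfl

lemma EB_succ (α : ℝ) (S : ℕ → Fin d' → ℝ) (r : ℕ → ℝ) (t s : ℕ) :
    EB α S r (t + 1) s =
      if s ≤ t then EB α S r t s
      else EB α S r t t + r (t + 1) * EB α S r t t + ((t : ℝ) + 2) * Sb S (t + 1)
        + α * GBf S r (EB α S r t) (t + 1) + α * GBf S r (EB α S r t) t := rfl

lemma EB_nonneg {α : ℝ} (hα : 0 ≤ α) {S : ℕ → Fin d' → ℝ} {r : ℕ → ℝ}
    (hr : ∀ t, 0 ≤ r t) : ∀ t s, 0 ≤ EB α S r t s := by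
  intro t
  induction t with
  | zero => intro s; rw [EB_zero]; exact Sb_nonneg _ _
  | succ t ih =>
    intro s
    rw [EB_succ]
    by_cases hs : s ≤ t
    · rw [if_pos hs]; exact ih s
    · rw [if_neg hs]
      have h1 : (0 : ℝ) ≤ (t : ℝ) + 2 := by positivity
      exact add_nonneg (add_nonneg (add_nonneg (add_nonneg (ih t)
        (mul_nonneg (hr _) (ih t))) (mul_nonneg h1 (Sb_nonneg _ _)))
        (mul_nonneg hα (GBf_nonneg hr ih _))) (mul_nonneg hα (GBf_nonneg hr ih _))

lemma Gaux_zero (S : ℕ → Fin d' → ℝ) (r : ℕ → ℝ) (N : ℕ → ℕ → Fin d' → ℝ)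
    (e : ℕ → ℝ) : Gaux S r N e 0 = 0 := by
  simp [Gaux]

lemma Gaux_bound {S : ℕ → Fin d' → ℝ} {r : ℕ → ℝ} {N : ℕ → ℕ → Fin d' → ℝ} {m : ℝ}
    (hr : ∀ t, 0 ≤ r t) (hm : 0 ≤ m) {T' : ℕ}
    (hN : ∀ i t j, t ≤ T' → 0 ≤ N i t j ∧ N i t j ≤ m)
    {e eb : ℕ → ℝ} {t : ℕ} (htT : t ≤ T')
    (he : ∀ u, u < t → |e u| ≤ eb u * m) :
    |Gaux S r N e t| ≤ GBf S r eb t * m := by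
  simp only [Gaux, GBf]
  rw [Finset.sum_mul]
  refine (Finset.abs_sum_le_sum_abs _ _).trans (Finset.sum_le_sum fun u hu => ?_)
  rw [Finset.mem_Icc] at hu
  obtain ⟨hu1, hut⟩ := hu
  rw [add_mul]
  refine (abs_add_le _ _).trans (add_le_add ?_ ?_)
  · rw [abs_mul, abs_of_nonneg (hr u)]
    have h1 := he (u - 1) (by omega)
    calc |e (u - 1)| * r u ≤ (eb (u - 1) * m) * r u :=
          mul_le_mul_of_nonneg_right h1 (hr u)
      _ = eb (u - 1) * r u * m := by ring
  · rw [Finset.sum_mul]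
    refine (Finset.abs_sum_le_sum_abs _ _).trans (Finset.sum_le_sum fun i hi => ?_)
    rw [Finset.mem_range] at hi
    simp only [dotp]
    refine (Finset.abs_sum_le_sum_abs _ _).trans ?_
    have hterm : ∀ j, |(N i (u - 1) j - N i u j) * (S u j - S i j)|
        ≤ m * (|S u j| + |S i j|) := by
      intro j
      rw [abs_mul]
      have h1 := hN i (u - 1) j (by omega)
      have h2 := hN i u j (by omega)
      refine mul_le_mul ?_ (abs_sub _ _) (abs_nonneg _) hm
      rw [abs_sub_le_iff]
      constructor <;> linarith [h1.1, h1.2, h2.1, h2.2]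
    refine (Finset.sum_le_sum fun j _ => hterm j).trans ?_
    rw [← Finset.mul_sum, Finset.sum_add_distrib]
    simp only [Sb]
    ring_nf
    exact le_refl _

lemma Piaux_nonneg {α : ℝ} (hα : 0 ≤ α) (S : ℕ → Fin d' → ℝ) (r : ℕ → ℝ)
    (N : ℕ → ℕ → Fin d' → ℝ) (e : ℕ → ℝ) (t : ℕ) :
    0 ≤ Piaux α S r N e t := by
  simp only [Piaux]
  refine mul_nonneg hα ?_
  have h0 := Finset.le_sup' (fun u => Gaux S r N e u)
    (Finset.mem_range.mpr (Nat.succ_pos t))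
  rw [Gaux_zero] at h0
  exact h0

lemma Piaux_bound {α : ℝ} (hα : 0 ≤ α) {S : ℕ → Fin d' → ℝ} {r : ℕ → ℝ}
    {N : ℕ → ℕ → Fin d' → ℝ} {m : ℝ}
    (hr : ∀ t, 0 ≤ r t) (hm : 0 ≤ m) {T' : ℕ}
    (hN : ∀ i t j, t ≤ T' → 0 ≤ N i t j ∧ N i t j ≤ m)
    {e eb : ℕ → ℝ} (hebnn : ∀ u, 0 ≤ eb u) {t : ℕ} (htT : t ≤ T')
    (he : ∀ u, u < t → |e u| ≤ eb u * m) :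
    |Piaux α S r N e t| ≤ α * (GBf S r eb t * m) := by
  rw [abs_of_nonneg (Piaux_nonneg hα S r N e t)]
  simp only [Piaux]
  refine mul_le_mul_of_nonneg_left ?_ hα
  refine Finset.sup'_le _ _ ?_
  intro u hu
  rw [Finset.mem_range] at hu
  have h1 : |Gaux S r N e u| ≤ GBf S r eb u * m :=
    Gaux_bound hr hm hN (by omega) (fun v hv => he v (by omega))
  have h2 : GBf S r eb u * m ≤ GBf S r eb t * m :=
    mul_le_mul_of_nonneg_right (GBf_mono hr hebnn (by omega)) hm
  calc Gaux S r N e u ≤ |Gaux S r N e u| := le_abs_self _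
    _ ≤ GBf S r eb u * m := h1
    _ ≤ GBf S r eb t * m := h2

lemma etaHist_bound {α : ℝ} (hα : 0 ≤ α) {S : ℕ → Fin d' → ℝ} {r : ℕ → ℝ}
    {N : ℕ → ℕ → Fin d' → ℝ} {m : ℝ}
    (hr : ∀ t, 0 ≤ r t) (hm : 0 ≤ m) {T' : ℕ}
    (hN : ∀ i t j, t ≤ T' → 0 ≤ N i t j ∧ N i t j ≤ m) :
    ∀ t, t ≤ T' → ∀ s, s ≤ t → |etaHist α 0 S r N t s| ≤ EB α S r t s * m := by
  intro t
  induction t with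
  | zero =>
    intro _ s _
    rw [etaHist_zero', EB_zero, zero_sub, abs_neg]
    simp only [dotp, Sb]
    rw [Finset.sum_mul]
    refine (Finset.abs_sum_le_sum_abs _ _).trans (Finset.sum_le_sum fun j _ => ?_)
    rw [abs_mul]
    have h0 := hN 0 0 j (Nat.zero_le T')
    rw [abs_of_nonneg h0.1]
    exact (mul_le_mul_of_nonneg_right h0.2 (abs_nonneg _)).trans
      (le_of_eq (mul_comm _ _))
  | succ t ih =>
    intro hT s hs
    have htT : t ≤ T' := by omega
    rw [etaHist_succ', EB_succ]
    by_cases hst : s ≤ t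
    · rw [if_pos hst, if_pos hst]
      exact ih htT s hst
    · rw [if_neg hst, if_neg hst]
      have hee : ∀ u, u < t + 1 → |etaHist α 0 S r N t u| ≤ EB α S r t u * m :=
        fun u hu => ih htT u (by omega)
      have hebnn : ∀ u, 0 ≤ EB α S r t u := fun u => EB_nonneg hα hr t u
      have het : |etaHist α 0 S r N t t| ≤ EB α S r t t * m := ih htT t le_rfl
      have hP1 : |Piaux α S r N (etaHist α 0 S r N t) (t + 1)|
          ≤ α * (GBf S r (EB α S r t) (t + 1) * m) :=
        Piaux_bound hα hr hm hN hebnn hT hee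
      have hP0 : |Piaux α S r N (etaHist α 0 S r N t) t|
          ≤ α * (GBf S r (EB α S r t) t * m) :=
        Piaux_bound hα hr hm hN hebnn htT (fun u hu => hee u (by omega))
      have hdot : |dotp
            (fun j => (∑ i ∈ Finset.range (t + 1), (N i t j - N i (t + 1) j))
              - N (t + 1) (t + 1) j) (fun j => S (t + 1) j)|
          ≤ ((t : ℝ) + 2) * Sb S (t + 1) * m := by
        have hXj : ∀ j, |(∑ i ∈ Finset.range (t + 1), (N i t j - N i (t + 1) j))
            - N (t + 1) (t + 1) j| ≤ ((t : ℝ) + 2) * m := by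
          intro j
          have hsum : |∑ i ∈ Finset.range (t + 1), (N i t j - N i (t + 1) j)|
              ≤ ((t : ℝ) + 1) * m := by
            refine (Finset.abs_sum_le_sum_abs _ _).trans ?_
            have hb : ∀ i ∈ Finset.range (t + 1), |N i t j - N i (t + 1) j| ≤ m := by
              intro i _
              have h1 := hN i t j htT
              have h2 := hN i (t + 1) j hT
              rw [abs_sub_le_iff]
              constructor <;> linarith [h1.1, h1.2, h2.1, h2.2]
            refine (Finset.sum_le_sum hb).trans ?_
            rw [Finset.sum_const, Finset.card_range, nsmul_eq_mul]
            push_cast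
            exact le_refl _
          have hN2 : |N (t + 1) (t + 1) j| ≤ m := by
            have h2 := hN (t + 1) (t + 1) j hT
            rw [abs_of_nonneg h2.1]; exact h2.2
          calc |(∑ i ∈ Finset.range (t + 1), (N i t j - N i (t + 1) j))
              - N (t + 1) (t + 1) j|
              ≤ |∑ i ∈ Finset.range (t + 1), (N i t j - N i (t + 1) j)|
                + |N (t + 1) (t + 1) j| := abs_sub _ _
            _ ≤ ((t : ℝ) + 1) * m + m := add_le_add hsum hN2
            _ = ((t : ℝ) + 2) * m := by ring
        simp only [dotp]
        refine (Finset.abs_sum_le_sum_abs _ _).trans ?_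
        have hb : ∀ j, |((∑ i ∈ Finset.range (t + 1), (N i t j - N i (t + 1) j))
            - N (t + 1) (t + 1) j) * S (t + 1) j|
            ≤ ((t : ℝ) + 2) * m * |S (t + 1) j| := by
          intro j
          rw [abs_mul]
          exact mul_le_mul_of_nonneg_right (hXj j) (abs_nonneg _)
        refine (Finset.sum_le_sum fun j _ => hb j).trans ?_
        rw [← Finset.mul_sum]
        simp only [Sb]
        ring_nf
        exact le_refl _
      set e := etaHist α 0 S r N t with hedef
      set eb := EB α S r t with hebdef
      have h4 : |r (t + 1) * e t| = r (t + 1) * |e t| := by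
        rw [abs_mul, abs_of_nonneg (hr _)]
      have habs : |e t + r (t + 1) * e t
            + dotp (fun j => (∑ i ∈ Finset.range (t + 1), (N i t j - N i (t + 1) j))
              - N (t + 1) (t + 1) j) (fun j => S (t + 1) j)
            - (Piaux α S r N e (t + 1) - Piaux α S r N e t)|
          ≤ |e t| + r (t + 1) * |e t|
            + |dotp (fun j => (∑ i ∈ Finset.range (t + 1), (N i t j - N i (t + 1) j))
              - N (t + 1) (t + 1) j) (fun j => S (t + 1) j)|
            + (|Piaux α S r N e (t + 1)| + |Piaux α S r N e t|) := by
        have g1 := abs_sub (e t + r (t + 1) * e t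
          + dotp (fun j => (∑ i ∈ Finset.range (t + 1), (N i t j - N i (t + 1) j))
            - N (t + 1) (t + 1) j) (fun j => S (t + 1) j))
          (Piaux α S r N e (t + 1) - Piaux α S r N e t)
        have g2 := abs_add_le (e t + r (t + 1) * e t)
          (dotp (fun j => (∑ i ∈ Finset.range (t + 1), (N i t j - N i (t + 1) j))
            - N (t + 1) (t + 1) j) (fun j => S (t + 1) j))
        have g3 := abs_add_le (e t) (r (t + 1) * e t)
        have g4 := abs_sub (Piaux α S r N e (t + 1)) (Piaux α S r N e t)
        linarith [h4 ▸ g3]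
      have hrexp : (eb t + r (t + 1) * eb t + ((t : ℝ) + 2) * Sb S (t + 1)
            + α * GBf S r eb (t + 1) + α * GBf S r eb t) * m
          = eb t * m + r (t + 1) * (eb t * m) + ((t : ℝ) + 2) * Sb S (t + 1) * m
            + α * (GBf S r eb (t + 1) * m) + α * (GBf S r eb t * m) := by ring
      rw [hrexp]
      have hre : r (t + 1) * |e t| ≤ r (t + 1) * (eb t * m) :=
        mul_le_mul_of_nonneg_left het (hr _)
      linarith [habs, het, hdot, hP1, hP0, hre]

lemma EB_meas {Ω' : Type*} [MeasurableSpace Ω'] {T' d'' : ℕ} (M : Market Ω' T' d'')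
    (α : ℝ) : ∀ t s,
    Measurable (fun ω => EB α (fun u => M.S u ω) (fun u => M.r u ω) t s) := by
  have hS : ∀ u j, Measurable (fun ω => M.S u ω j) := fun u j =>
    (measurable_pi_apply j).comp ((M.S_adapted u).mono (M.F_le u) le_rfl)
  have hr : ∀ u, Measurable (fun ω => M.r u ω) := fun u =>
    (M.r_adapted u).mono (M.F_le u) le_rfl
  have hSb : ∀ u, Measurable (fun ω => Sb (fun v => M.S v ω) u) := by
    intro u
    simp only [Sb]
    exact Finset.measurable_sum _ fun j _ => (hS u j).abs
  intro t
  induction t with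
  | zero =>
    intro s
    simp only [EB_zero]
    exact hSb 0
  | succ t ih =>
    intro s
    have hGB : ∀ u, Measurable (fun ω =>
        GBf (fun v => M.S v ω) (fun v => M.r v ω)
          (EB α (fun v => M.S v ω) (fun v => M.r v ω) t) u) := by
      intro u
      simp only [GBf]
      refine Finset.measurable_sum _ fun v _ => ?_
      exact ((ih (v - 1)).mul (hr v)).add
        (Finset.measurable_sum _ fun i _ => (hSb v).add (hSb i))
    simp only [EB_succ]
    by_cases hs : s ≤ t
    · simp only [if_pos hs]
      exact ih s
    · simp only [if_neg hs]
      exact ((((ih t).add ((hr (t + 1)).mul (ih t))).add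
        (measurable_const.mul (hSb (t + 1)))).add
        (measurable_const.mul (hGB (t + 1)))).add (measurable_const.mul (hGB t))

lemma fin_sup_spec {d' : ℕ} (a : Fin d' → ℝ) (h : ∀ j, 0 ≤ a j) :
    0 ≤ (⨆ j, a j) ∧ ∀ j, a j ≤ ⨆ j, a j := by
  rcases isEmpty_or_nonempty (Fin d') with he | hne
  · constructor
    · rw [Real.iSup_of_isEmpty]
    · intro j; exact (IsEmpty.false j).elim
  · have hbdd : BddAbove (Set.range a) := (Set.finite_range a).bddAbove
    have hle : ∀ j, a j ≤ ⨆ j, a j := fun j => le_ciSup hbdd j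
    exact ⟨le_trans (h (Classical.arbitrary _)) (hle _), hle⟩

lemma stratMax_spec {Ω' : Type*} {d' : ℕ} (T' : ℕ) (N : ℕ → ℕ → Ω' → Fin d' → ℝ)
    (ω : Ω') (hnn : ∀ i j, 0 ≤ N i i ω j) (hT : 0 < T') :
    0 ≤ stratMax T' N ω ∧ ∀ i, i < T' → ∀ j, N i i ω j ≤ stratMax T' N ω := by
  set g : ℕ → ℝ := fun i => ⨆ j, N i i ω j with hg
  have hgspec : ∀ i, 0 ≤ g i ∧ ∀ j, N i i ω j ≤ g i := fun i => fin_sup_spec _ (hnn i)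
  set F : ℕ → ℝ := fun i => ⨆ (_ : i ∈ Finset.range T'), g i with hF
  have hFeq : ∀ i, i ∈ Finset.range T' → F i = g i := fun i hi => ciSup_pos hi
  have hFeq0 : ∀ i, i ∉ Finset.range T' → F i = 0 := by
    intro i hi
    haveI : IsEmpty (i ∈ Finset.range T') := ⟨hi⟩
    exact Real.iSup_of_isEmpty _
  have hFnn : ∀ i, 0 ≤ F i := by
    intro i
    by_cases hi : i ∈ Finset.range T'
    · rw [hFeq i hi]; exact (hgspec i).1
    · rw [hFeq0 i hi]
  have hFle : ∀ i, F i ≤ ∑ i' ∈ Finset.range T', max (g i') 0 := by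
    intro i
    by_cases hi : i ∈ Finset.range T'
    · rw [hFeq i hi]
      exact (le_max_left _ _).trans
        (Finset.single_le_sum (fun i' _ => le_max_right (g i') 0) hi)
    · rw [hFeq0 i hi]
      exact Finset.sum_nonneg fun i' _ => le_max_right _ _
  have hbdd : BddAbove (Set.range F) :=
    ⟨∑ i' ∈ Finset.range T', max (g i') 0, by rintro x ⟨i, rfl⟩; exact hFle i⟩
  have hsm : stratMax T' N ω = ⨆ i, F i := rfl
  have hsup : ∀ i, F i ≤ stratMax T' N ω := by
    intro i; rw [hsm]; exact le_ciSup hbdd i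
  constructor
  · exact le_trans (hFnn 0) (hsup 0)
  · intro i hi j
    calc N i i ω j ≤ g i := (hgspec i).2 j
      _ = F i := (hFeq i (Finset.mem_range.mpr hi)).symm
      _ ≤ stratMax T' N ω := hsup i

end AuxNUIBR

lemma Market.IsStrategy.smul (M : Market Ω T d) {N : ℕ → ℕ → Ω → Fin d → ℝ}
    (hN : M.IsStrategy N) {c : ℝ} (hc : 0 ≤ c) :
    M.IsStrategy (fun i t ω j => c * N i t ω j) := by
  obtain ⟨h1, h2, h3, h4, h5⟩ := hN
  refine ⟨fun i t => ?_, fun i t ω j => mul_nonneg hc (h2 i t ω j),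
    fun i t hit htT ω j => mul_le_mul_of_nonneg_left (h3 i t hit htT ω j) hc,
    fun i ω j => by simp only []; rw [h4 i ω j, mul_zero],
    fun i t hti ω j => by simp only []; rw [h5 i t hti ω j, mul_zero]⟩
  have := @measurable_pi_iff Ω (Fin d) (fun _ => ℝ) (M.F t) _ (fun ω => (fun j => c * N i t ω j))
  exact this.mpr fun j => ((measurable_pi_apply j).comp (h1 i t)).const_mul c

lemma Market.strat_le_diag (M : Market Ω T d) {N : ℕ → ℕ → Ω → Fin d → ℝ}
    (hN : M.IsStrategy N) :
    ∀ t i, i ≤ t → t < T → ∀ ω j, N i t ω j ≤ N i i ω j := by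
  intro t
  induction t with
  | zero =>
    intro i h1 _ ω j
    interval_cases i
    exact le_rfl
  | succ t ih =>
    intro i h1 h2 ω j
    rcases Nat.eq_or_lt_of_le h1 with heq | hlt
    · rw [heq]
    · have hi : i ≤ t := by omega
      exact le_trans (hN.2.2.1 i t hi (by omega) ω j) (ih i hi (by omega) ω j)

lemma Market.V_smul (M : Market Ω T d) (α : ℝ) (N : ℕ → ℕ → Ω → Fin d → ℝ)
    {c : ℝ} (hc : 0 ≤ c) (ω : Ω) :
    M.V α 0 (fun i t ω j => c * N i t ω j) ω = c * M.V α 0 N ω :=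
  etaHist_smul hc α (fun t => M.S t ω) (fun t => M.r t ω) (fun i u => N i u ω) T T

/-- The NUIBR condition implies the no-arbitrage condition. -/
theorem NA_of_NUIBR
    (M : Market Ω T d) (α : ℝ) (hα0 : 0 ≤ α) (hα1 : α < 1)
    (h : M.NUIBR α) : M.NA α := by
  intro N hN hV
  haveI := M.hProb
  rcases Nat.eq_zero_or_pos T with hT | hT
  · subst hT
    refine Filter.Eventually.of_forall fun ω => ?_
    show etaHist α 0 (fun t => M.S t ω) (fun t => M.r t ω) (fun i t => N i t ω) 0 0 = 0
    rw [etaHist_zero']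
    have h00 : ∀ j, N 0 0 ω j = 0 := fun j => hN.2.2.2.1 0 ω j
    simp [dotp, h00]
  by_contra hcon
  have hne : M.P {ω | ¬ M.V α 0 N ω = 0} ≠ 0 := fun h0 => hcon (ae_iff.mpr h0)
  have hneg : M.P {ω | M.V α 0 N ω < 0} = 0 := by
    have := ae_iff.mp hV
    simpa only [not_le] using this
  have hpos : M.P {ω | 0 < M.V α 0 N ω} ≠ 0 := by
    intro h0
    apply hne
    have hsub : {ω | ¬ M.V α 0 N ω = 0}
        ⊆ {ω | 0 < M.V α 0 N ω} ∪ {ω | M.V α 0 N ω < 0} := by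
      intro ω hω
      rcases lt_or_gt_of_ne (Ne.symm hω) with h1 | h1
      · exact Or.inl h1
      · exact Or.inr h1
    refine le_antisymm ?_ zero_le
    calc M.P {ω | ¬ M.V α 0 N ω = 0}
        ≤ M.P ({ω | 0 < M.V α 0 N ω} ∪ {ω | M.V α 0 N ω < 0}) := measure_mono hsub
      _ ≤ M.P {ω | 0 < M.V α 0 N ω} + M.P {ω | M.V α 0 N ω < 0} :=
          measure_union_le _ _
      _ = 0 := by rw [h0, hneg, add_zero]
  have hδex : ∃ k : ℕ, M.P {ω | 1 / ((k : ℝ) + 1) < M.V α 0 N ω} ≠ 0 := by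
    by_contra hk
    push_neg at hk
    apply hpos
    have hsub : {ω | 0 < M.V α 0 N ω}
        ⊆ ⋃ k : ℕ, {ω | 1 / ((k : ℝ) + 1) < M.V α 0 N ω} := by
      intro ω hω
      obtain ⟨k, hk'⟩ := exists_nat_one_div_lt (show (0:ℝ) < M.V α 0 N ω from hω)
      exact Set.mem_iUnion.mpr ⟨k, hk'⟩
    refine le_antisymm ?_ zero_le
    calc M.P {ω | 0 < M.V α 0 N ω}
        ≤ M.P (⋃ k : ℕ, {ω | 1 / ((k : ℝ) + 1) < M.V α 0 N ω}) := measure_mono hsub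
      _ ≤ ∑' k : ℕ, M.P {ω | 1 / ((k : ℝ) + 1) < M.V α 0 N ω} := measure_iUnion_le _
      _ = 0 := by
          rw [ENNReal.tsum_eq_zero]
          intro i
          exact hk i
  obtain ⟨k, hp0⟩ := hδex
  set δ : ℝ := 1 / ((k : ℝ) + 1) with hδdef
  have hδpos : 0 < δ := by positivity
  set p0 := M.P {ω | δ < M.V α 0 N ω} with hp0def
  have hp0top : p0 ≠ ⊤ := measure_ne_top _ _
  have hεpos : 0 < p0.toReal / 2 := by
    have := ENNReal.toReal_pos hp0 hp0top
    linarith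
  obtain ⟨Rf, hRs, hRv, hRb⟩ := h 0
  obtain ⟨C, hC⟩ := hRb 0 le_rfl (p0.toReal / 2) hεpos
  have hofε : ENNReal.ofReal (p0.toReal / 2) < p0 := by
    conv_rhs => rw [← ENNReal.ofReal_toReal hp0top]
    exact (ENNReal.ofReal_lt_ofReal_iff (ENNReal.toReal_pos hp0 hp0top)).mpr
      (by linarith)
  set Nn : ℕ → ℕ → ℕ → Ω → Fin d → ℝ := fun n i t ω j => (n : ℝ) * N i t ω j
    with hNn
  have hSn : ∀ n, M.IsStrategy (Nn n) := fun n => hN.smul M (Nat.cast_nonneg n)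
  have hVn : ∀ (n : ℕ) ω, M.V α 0 (Nn n) ω = (n : ℝ) * M.V α 0 N ω := fun n ω =>
    M.V_smul α N (Nat.cast_nonneg n) ω
  set D : Ω → ℝ := fun ω => EB α (fun u => M.S u ω) (fun u => M.r u ω) T T with hD
  have hDmeas : Measurable D := EB_meas M α T T
  have hDnn : ∀ ω, 0 ≤ D ω := fun ω =>
    EB_nonneg hα0 (fun u => M.r_nonneg u ω) T T
  set E : ℕ → Set Ω := fun n => {ω | (n : ℝ) * δ ≤ D ω * C} with hE
  have hkey : ∀ n : ℕ, p0 ≤ M.P (E n) + ENNReal.ofReal (p0.toReal / 2) := by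
    intro n
    set M' := Rf.apply (Nn n) with hM'def
    have hM' : M.IsStrategy M' := hRs (Nn n) (hSn n)
    have hCn : M.P {ω | C < |stratMax T M' ω|} ≤ ENNReal.ofReal (p0.toReal / 2) := by
      refine hC _ (subset_convexHull ℝ _ ?_)
      refine ⟨Nn n, hSn n, ?_, rfl⟩
      filter_upwards [hV] with ω hω
      rw [hVn n ω]
      have h9 : 0 ≤ (n : ℝ) * M.V α 0 N ω := mul_nonneg (Nat.cast_nonneg n) hω
      linarith
    have hgood : ∀ᵐ ω ∂M.P, M.V α 0 (Nn n) ω ≤ M.V α 0 M' ω := hRv (Nn n) (hSn n)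
    have hVb : ∀ ω, M.V α 0 M' ω ≤ D ω * stratMax T M' ω := by
      intro ω
      have hsm := stratMax_spec T M' ω (fun i j => hM'.2.1 i i ω j) hT
      have hentry : ∀ i t j, t ≤ T →
          0 ≤ M' i t ω j ∧ M' i t ω j ≤ stratMax T M' ω := by
        intro i t j htT
        refine ⟨hM'.2.1 i t ω j, ?_⟩
        by_cases hti : t < i
        · rw [hM'.2.2.2.2 i t hti ω j]; exact hsm.1
        · push_neg at hti
          by_cases htT' : t = T
          · subst htT'
            rw [hM'.2.2.2.1 i ω j]; exact hsm.1
          · have hlt : t < T := lt_of_le_of_ne htT htT'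
            exact le_trans (M.strat_le_diag hM' t i hti hlt ω j)
              (hsm.2 i (by omega) j)
      have hb := etaHist_bound (S := fun u => M.S u ω) hα0
        (fun u => M.r_nonneg u ω) hsm.1
        (fun i t j htT => hentry i t j htT) T le_rfl T le_rfl
      exact le_trans (le_abs_self _) hb
    have hcover : {ω | δ < M.V α 0 N ω} ⊆ E n ∪ ({ω | C < |stratMax T M' ω|}
        ∪ {ω | ¬ M.V α 0 (Nn n) ω ≤ M.V α 0 M' ω}) := by
      intro ω hω
      by_cases h1 : C < |stratMax T M' ω|
      · exact Or.inr (Or.inl h1)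
      by_cases h2 : M.V α 0 (Nn n) ω ≤ M.V α 0 M' ω
      · left
        show (n : ℝ) * δ ≤ D ω * C
        have e1 : (n : ℝ) * δ ≤ (n : ℝ) * M.V α 0 N ω :=
          mul_le_mul_of_nonneg_left (le_of_lt hω) (Nat.cast_nonneg n)
        rw [← hVn n ω] at e1
        have e2 := hVb ω
        have e3 : stratMax T M' ω ≤ C := le_trans (le_abs_self _) (not_lt.mp h1)
        have e4 : D ω * stratMax T M' ω ≤ D ω * C :=
          mul_le_mul_of_nonneg_left e3 (hDnn ω)
        linarith
      · exact Or.inr (Or.inr h2)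
    calc p0 = M.P {ω | δ < M.V α 0 N ω} := hp0def
      _ ≤ M.P (E n ∪ ({ω | C < |stratMax T M' ω|}
          ∪ {ω | ¬ M.V α 0 (Nn n) ω ≤ M.V α 0 M' ω})) := measure_mono hcover
      _ ≤ M.P (E n) + M.P ({ω | C < |stratMax T M' ω|}
          ∪ {ω | ¬ M.V α 0 (Nn n) ω ≤ M.V α 0 M' ω}) := measure_union_le _ _
      _ ≤ M.P (E n) + (M.P {ω | C < |stratMax T M' ω|}
          + M.P {ω | ¬ M.V α 0 (Nn n) ω ≤ M.V α 0 M' ω}) :=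
          add_le_add_right (measure_union_le _ _) _
      _ = M.P (E n) + M.P {ω | C < |stratMax T M' ω|} := by
          rw [ae_iff.mp hgood, add_zero]
      _ ≤ M.P (E n) + ENNReal.ofReal (p0.toReal / 2) := add_le_add_right hCn _
  have hEmeas : ∀ n, MeasurableSet (E n) := fun n =>
    measurableSet_le measurable_const (hDmeas.mul_const C)
  have hEanti : Antitone E := by
    intro a b hab ω hω
    have hab' : (a : ℝ) * δ ≤ (b : ℝ) * δ :=
      mul_le_mul_of_nonneg_right (Nat.cast_le.mpr hab) hδpos.le
    exact le_trans hab' hω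
  have hEempty : ⋂ n, E n = ∅ := by
    ext ω
    simp only [Set.mem_iInter, Set.mem_empty_iff_false, iff_false, not_forall]
    obtain ⟨n, hn⟩ := exists_nat_gt (D ω * C / δ)
    refine ⟨n, ?_⟩
    rw [div_lt_iff₀ hδpos] at hn
    intro hcontra
    have : (n : ℝ) * δ ≤ D ω * C := hcontra
    linarith
  have htend := tendsto_measure_iInter_atTop (μ := M.P)
    (fun n => (hEmeas n).nullMeasurableSet) hEanti
    ⟨0, measure_ne_top M.P (E 0)⟩
  rw [hEempty, measure_empty] at htend
  have htend2 : Filter.Tendsto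
      (fun n => M.P (E n) + ENNReal.ofReal (p0.toReal / 2))
      Filter.atTop (nhds (0 + ENNReal.ofReal (p0.toReal / 2))) :=
    Filter.Tendsto.add htend tendsto_const_nhds
  rw [zero_add] at htend2
  obtain ⟨n, hn⟩ := (htend2.eventually_lt_const hofε).exists
  exact absurd (hkey n) (not_le.mpr hn)

end
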